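/- arXiv:1805.09057 — 2 statements merged into one kernel-verified Lean document; each statement's English description precedes it below -/
import Mathlib

section
/- The formal power series w(z) satisfying z = 2w(1-w^2)/(1+w^2)^2 with w(0) = 0 and w'(0) = 1/2 has only odd-degree terms; its expansion begins w = z/2 + 3z^3/8 + 22z^5/32 + 211z^7/128 + 2306z^9/512 + ⋯, i.e., with c = 2, w = z/c + 3z^3/c^3 + 22z^5/c^5 + 211z^7/c^7 + 2306z^9/c^9 + O(z^{11}). -/
open PowerSeries

theorem w_of_z_odd_series (w : PowerSeries ℚ)
    (h0 : PowerSeries.constantCoeff w = 0)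
    (heq : (PowerSeries.X : PowerSeries ℚ) * (1 + w ^ 2) ^ 2 = 2 * w * (1 - w ^ 2)) :
    (∀ n : ℕ, Even n → PowerSeries.coeff n w = 0) ∧
      PowerSeries.coeff 1 w = 1 / 2 ∧
      PowerSeries.coeff 3 w = 3 / 8 ∧
      PowerSeries.coeff 5 w = 22 / 32 ∧
      PowerSeries.coeff 7 w = 211 / 128 ∧
      PowerSeries.coeff 9 w = 2306 / 512 := by
  -- Part A : even coefficients vanish, via the symmetry w ↦ -(rescale (-1) w)
  have hrw : rescale (-1 : ℚ) X = -(X : PowerSeries ℚ) := by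
    ext n
    rw [coeff_rescale, map_neg, coeff_X]
    split_ifs with h <;> simp [h]
  set u := rescale (-1 : ℚ) w with hu
  have hr := congrArg (rescale (-1 : ℚ)) heq
  simp only [map_mul, map_add, map_pow, map_one, map_sub, map_ofNat, hrw, ← hu] at hr
  have hu0 : constantCoeff u = 0 := by
    rw [← coeff_zero_eq_constantCoeff_apply, hu, coeff_rescale, pow_zero, one_mul,
      coeff_zero_eq_constantCoeff_apply, h0]
  have hkey : (w - -u) *
      (X * (w + -u) * (2 + w ^ 2 + (-u) ^ 2) - 2 + 2 * (w ^ 2 + w * -u + (-u) ^ 2)) = 0 := by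
    linear_combination heq + hr
  have hwu : w = -u := by
    rcases mul_eq_zero.mp hkey with h | h
    · exact sub_eq_zero.mp h
    · exfalso
      have := congrArg (constantCoeff (R := ℚ)) h
      simp [map_sub, map_add, map_mul, map_pow, map_ofNat, h0, hu0] at this
  have heven : ∀ n : ℕ, Even n → PowerSeries.coeff n w = 0 := by
    intro n hn
    have h1 : coeff n w = -((-1 : ℚ) ^ n * coeff n w) := by
      conv_lhs => rw [hwu]
      rw [map_neg, hu, coeff_rescale]
    rw [hn.neg_one_pow, one_mul] at h1
    linarith
  refine ⟨heven, ?_⟩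
  -- Part B : explicit low-order coefficients
  have heqU : (X : PowerSeries ℚ) * (262144 + (512 * w) ^ 2) ^ 2
      = 1024 * (512 * w) * (262144 - (512 * w) ^ 2) := by
    linear_combination (512 : PowerSeries ℚ) ^ 4 * heq
  set A : PowerSeries ℚ := 256 * X + 192 * X ^ 3 + 352 * X ^ 5 + 844 * X ^ 7 + 2306 * X ^ 9
    with hA
  set G : PowerSeries ℚ := X * (512 * w + A) * (524288 + (512 * w) ^ 2 + A ^ 2)
      - 268435456 + 1024 * ((512 * w) ^ 2 + (512 * w) * A + A ^ 2) with hG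
  set S : PowerSeries ℚ :=
    -1827374366720 - 2480242950144 * X ^ 2 - 4478254186496 * X ^ 4 - 8426980638720 * X ^ 6
    - 14373608751104 * X ^ 8 - 14769103634432 * X ^ 10 - 21001898196992 * X ^ 12
    - 30310444236800 * X ^ 14 - 38181772566528 * X ^ 16 - 34296536158464 * X ^ 18
    - 33920821675520 * X ^ 20 - 39993217157504 * X ^ 22 - 41398094047616 * X ^ 24
    - 28277252628496 * X ^ 26 with hS
  have key : (512 * w - A) * G = X ^ 11 * S := by
    rw [hG, hA, hS]
    linear_combination heqU
  have hA0 : constantCoeff A = 0 := by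
    rw [hA]; simp
  have hGunit : IsUnit G := by
    rw [PowerSeries.isUnit_iff_constantCoeff]
    have hc : constantCoeff G = -268435456 := by
      rw [hG]
      simp [map_sub, map_add, map_mul, map_pow, map_ofNat, h0, hA0]
    rw [hc]
    norm_num
  have hdvd : (X : PowerSeries ℚ) ^ 11 ∣ 512 * w - A := by
    obtain ⟨g, hg⟩ := hGunit
    refine ⟨S * ↑g⁻¹, ?_⟩
    calc (512 * w - A : PowerSeries ℚ)
        = (512 * w - A) * (↑g * ↑g⁻¹) := by rw [Units.mul_inv, mul_one]
      _ = ((512 * w - A) * G) * ↑g⁻¹ := by rw [hg, mul_assoc]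
      _ = X ^ 11 * (S * ↑g⁻¹) := by rw [key, mul_assoc]
  have hA' : A = C 256 * X + C 192 * X ^ 3 + C 352 * X ^ 5 + C 844 * X ^ 7
      + C 2306 * X ^ 9 := by
    rw [hA]; simp [map_ofNat]
  have hcw : ∀ m, m < 11 → (512 : ℚ) * coeff m w = coeff m A := by
    intro m hm
    have h1 := X_pow_dvd_iff.mp hdvd m hm
    have h2 : (512 : PowerSeries ℚ) * w = C 512 * w := by norm_num [map_ofNat]
    rw [map_sub, h2, coeff_C_mul, sub_eq_zero] at h1
    exact h1
  have c1 := hcw 1 (by norm_num)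
  have c3 := hcw 3 (by norm_num)
  have c5 := hcw 5 (by norm_num)
  have c7 := hcw 7 (by norm_num)
  have c9 := hcw 9 (by norm_num)
  rw [hA'] at c1 c3 c5 c7 c9
  simp only [map_add, coeff_C_mul, coeff_X, coeff_X_pow] at c1 c3 c5 c7 c9
  norm_num at c1 c3 c5 c7 c9
  refine ⟨by linarith, by linarith, by linarith, by linarith, by linarith⟩
end

section
/- For an n₁ × n₂ torus grid with n₁, n₂ > 6, the number of lattice polygons with exactly 6 edges equals 2N, where N = n₁·n₂. -/
/-- The second endpoint offset of an edge: a horizontal edge (`true`) goes to `v + (1,0)`,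
a vertical edge (`false`) to `v + (0,1)`. -/
def torusStep (n₁ n₂ : ℕ) (d : Bool) : ZMod n₁ × ZMod n₂ :=
  if d then (1, 0) else (0, 1)

/-- The degree of the vertex `v` with respect to a set `E` of edges of the torus grid:
an edge is a pair (base vertex, direction), incident to its base vertex and to
base vertex + step. -/
def torusDeg {n₁ n₂ : ℕ} (E : Finset ((ZMod n₁ × ZMod n₂) × Bool))
    (v : ZMod n₁ × ZMod n₂) : ℕ :=
  (E.filter fun e => e.1 = v ∨ e.1 + torusStep n₁ n₂ e.2 = v).card

/-- A lattice polygon: a nonempty set of edges in which every vertex has even degree. -/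
def IsLatticePolygon {n₁ n₂ : ℕ} (E : Finset ((ZMod n₁ × ZMod n₂) × Bool)) : Prop :=
  E.Nonempty ∧ ∀ v : ZMod n₁ × ZMod n₂, Even (torusDeg E v)

namespace Aux

variable {n₁ n₂ : ℕ}

lemma even_ind4 {A B C D : Prop} [Decidable A] [Decidable B] [Decidable C] [Decidable D] :
    Even ((if A then 1 else 0) + (if B then 1 else 0) + (if C then 1 else 0)
      + (if D then 1 else 0) : ℕ) ↔ ((A ↔ ¬ B) ↔ (C ↔ ¬ D)) := by
  by_cases hA : A <;> by_cases hB : B <;> by_cases hC : C <;> by_cases hD : D <;>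
    simp_all <;> decide

lemma zmod_const {n : ℕ} [NeZero n] (g : ZMod n → Prop) (h : ∀ y, g (y + 1) ↔ g y) :
    ∀ y y', g y ↔ g y' := by
  have key : ∀ (k : ℕ) (y : ZMod n), g (y + k) ↔ g y := by
    intro k
    induction k with
    | zero => simp
    | succ k ih =>
      intro y
      have : ((k + 1 : ℕ) : ZMod n) = (k : ZMod n) + 1 := by push_cast; ring
      rw [this, ← add_assoc, h, ih]
  intro y y'
  have hy : y' = y + ((y' - y).val : ℕ) := by
    simp [ZMod.natCast_val, ZMod.cast_id]
  rw [hy, key]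

lemma card_val_lt {n : ℕ} [NeZero n] (d : ℕ) (hd : d ≤ n) (y₁ : ZMod n) :
    (Finset.univ.filter fun y : ZMod n => (y - y₁).val < d).card = d := by
  have himg : (Finset.univ.filter fun y : ZMod n => (y - y₁).val < d) =
      (Finset.range d).image (fun k : ℕ => y₁ + (k : ZMod n)) := by
    ext y
    simp only [Finset.mem_filter, Finset.mem_univ, true_and, Finset.mem_image,
      Finset.mem_range]
    constructor
    · intro hy
      exact ⟨(y - y₁).val, hy, by simp [ZMod.natCast_val, ZMod.cast_id]⟩
    · rintro ⟨k, hk, rfl⟩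
      have : (y₁ + (k : ZMod n) - y₁) = (k : ZMod n) := by ring
      rw [this, ZMod.val_cast_of_lt (lt_of_lt_of_le hk hd)]
      exact hk
  rw [himg, Finset.card_image_of_injOn, Finset.card_range]
  intro k hk k' hk' hkk
  simp only [Finset.coe_range, Set.mem_Iio, Finset.mem_range] at hk hk'
  have : (k : ZMod n) = (k' : ZMod n) := by
    have := add_left_cancel hkk
    exact this
  have := congrArg ZMod.val this
  rwa [ZMod.val_cast_of_lt (lt_of_lt_of_le hk hd),
    ZMod.val_cast_of_lt (lt_of_lt_of_le hk' hd)] at this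


lemma zmod_natcast_eq_iff {n : ℕ} (k k' : ℕ) (hk : k < n) (hk' : k' < n) :
    ((k : ZMod n) = (k' : ZMod n)) ↔ k = k' := by
  constructor
  · intro h
    haveI : NeZero n := ⟨by omega⟩
    have := congrArg ZMod.val h
    rwa [ZMod.val_cast_of_lt hk, ZMod.val_cast_of_lt hk'] at this
  · rintro rfl; rfl

section Block
variable {n : ℕ} [NeZero n] (g : ZMod n → Prop) {y₁ y₂ : ZMod n}

/-- If `g` flips exactly at `y₁` and `y₂`, then on the arc from `y₁` (exclusive of the flip at
`y₂`) `g` is constant. -/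
lemma block_main (hn : 2 ≤ n) (hne : y₁ ≠ y₂)
    (hflip : ∀ y, ((g y ↔ ¬ g (y - 1)) ↔ (y = y₁ ∨ y = y₂))) :
    ∀ y, g y ↔ ((y - y₁).val < (y₂ - y₁).val ↔ g y₁) := by
  set d := (y₂ - y₁).val with hd
  have hdn : d < n := ZMod.val_lt _
  have hd0 : 0 < d := by
    rcases Nat.eq_zero_or_pos d with h | h
    · exfalso
      have h0 : y₂ - y₁ = 0 := (ZMod.val_eq_zero (y₂ - y₁)).mp h
      exact hne (by linear_combination -h0)
    · exact h
  have hy₂ : y₂ = y₁ + (d : ZMod n) := by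
    simp [hd, ZMod.natCast_val, ZMod.cast_id]
  -- no flip in the interior of each arc
  have noflip : ∀ y, y ≠ y₁ → y ≠ y₂ → (g y ↔ g (y - 1)) := by
    intro y h1 h2
    have := (hflip y)
    have hno : ¬ (y = y₁ ∨ y = y₂) := by tauto
    rw [iff_false_intro hno, iff_false] at this
    tauto
  have part1 : ∀ k : ℕ, k < d → (g (y₁ + (k : ZMod n)) ↔ g y₁) := by
    intro k
    induction k with
    | zero => simp
    | succ k ih =>
      intro hk
      have hne1 : y₁ + ((k+1 : ℕ) : ZMod n) ≠ y₁ := by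
        intro h
        have : ((k+1 : ℕ) : ZMod n) = ((0:ℕ) : ZMod n) := by
          push_cast at h ⊢; linear_combination h
        rw [zmod_natcast_eq_iff _ _ (by omega) (by omega)] at this
        omega
      have hne2 : y₁ + ((k+1 : ℕ) : ZMod n) ≠ y₂ := by
        rw [hy₂]
        intro h
        have : ((k+1 : ℕ) : ZMod n) = ((d : ℕ) : ZMod n) := by
          push_cast at h ⊢; linear_combination h
        rw [zmod_natcast_eq_iff _ _ (by omega) hdn] at this
        omega
      have hsub : y₁ + ((k+1 : ℕ) : ZMod n) - 1 = y₁ + (k : ZMod n) := by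
        push_cast; ring
      rw [noflip _ hne1 hne2, hsub, ih (by omega)]
  have part3 : g y₂ ↔ ¬ g y₁ := by
    have hf := (hflip y₂).mpr (Or.inr rfl)
    have hsub : y₂ - 1 = y₁ + ((d - 1 : ℕ) : ZMod n) := by
      rw [hy₂]
      have : ((d - 1 : ℕ) : ZMod n) = (d : ZMod n) - 1 := by
        push_cast [Nat.cast_sub hd0]; ring
      rw [this]; ring
    rw [hf, hsub, part1 _ (by omega)]
  have part2 : ∀ k : ℕ, k < n - d → (g (y₂ + (k : ZMod n)) ↔ ¬ g y₁) := by
    intro k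
    induction k with
    | zero => intro _; simpa using part3
    | succ k ih =>
      intro hk
      have hne2 : y₂ + ((k+1 : ℕ) : ZMod n) ≠ y₂ := by
        intro h
        have : ((k+1 : ℕ) : ZMod n) = ((0:ℕ) : ZMod n) := by
          push_cast at h ⊢; linear_combination h
        rw [zmod_natcast_eq_iff _ _ (by omega) (by omega)] at this
        omega
      have hne1 : y₂ + ((k+1 : ℕ) : ZMod n) ≠ y₁ := by
        rw [hy₂]
        intro h
        have : ((d + (k+1) : ℕ) : ZMod n) = ((n : ℕ) : ZMod n) := by
          push_cast at h ⊢
          rw [ZMod.natCast_self]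
          linear_combination h
        rw [show ((n:ℕ) : ZMod n) = ((0:ℕ):ZMod n) by simp [ZMod.natCast_self]] at this
        rcases Nat.lt_or_ge (d + (k+1)) n with hlt | hge
        · rw [zmod_natcast_eq_iff _ _ hlt (by omega)] at this; omega
        · omega
      have hsub : y₂ + ((k+1 : ℕ) : ZMod n) - 1 = y₂ + (k : ZMod n) := by
        push_cast; ring
      rw [noflip _ hne1 hne2, hsub, ih (by omega)]
  -- assemble
  intro y
  set k := (y - y₁).val with hk
  have hkn : k < n := ZMod.val_lt _
  have hy : y = y₁ + (k : ZMod n) := by simp [hk, ZMod.natCast_val, ZMod.cast_id]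
  rcases Nat.lt_or_ge k d with hlt | hge
  · rw [hy, part1 _ hlt]
    simp [← hk, hlt]
  · have hy' : y = y₂ + ((k - d : ℕ) : ZMod n) := by
      rw [hy₂, hy]
      push_cast [Nat.cast_sub hge]
      ring
    rw [hy', part2 _ (by omega)]
    have : ¬ (k < d) := by omega
    rw [← hk] at *
    simp [this]

end Block

lemma deg_eq (h1 : (1:ZMod n₁) ≠ 0) (h2 : (1:ZMod n₂) ≠ 0)
    (E : Finset ((ZMod n₁ × ZMod n₂) × Bool)) (x : ZMod n₁) (y : ZMod n₂) :
    torusDeg E (x,y) =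
      (if ((x,y),true) ∈ E then 1 else 0) + (if ((x-1,y),true) ∈ E then 1 else 0)
      + (if ((x,y),false) ∈ E then 1 else 0) + (if ((x,y-1),false) ∈ E then 1 else 0) := by
  classical
  have hset : E.filter (fun e => e.1 = (x,y) ∨ e.1 + torusStep n₁ n₂ e.2 = (x,y)) =
      E.filter (fun e => e ∈ ({((x,y),true), ((x-1,y),true), ((x,y),false), ((x,y-1),false)} :
        Finset ((ZMod n₁ × ZMod n₂) × Bool))) := by
    apply Finset.filter_congr
    rintro ⟨⟨u,w⟩, d⟩ _
    cases d <;>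
      simp [torusStep, Prod.ext_iff, sub_eq_iff_eq_add, eq_sub_iff_add_eq]
  rw [torusDeg, hset, Finset.filter_mem_eq_inter, Finset.inter_comm,
    ← Finset.filter_mem_eq_inter, Finset.card_filter]
  have d12 : ((x,y),true) ≠ ((x-1,y),true) := by
    simp [Prod.ext_iff]; intro h; apply h1; linear_combination h
  have d34 : ((x,y),false) ≠ ((x,y-1),false) := by
    simp [Prod.ext_iff]; intro h; apply h2; linear_combination h
  rw [show ({((x,y),true), ((x-1,y),true), ((x,y),false), ((x,y-1),false)} :
      Finset ((ZMod n₁ × ZMod n₂) × Bool)) =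
      insert ((x,y),true) (insert ((x-1,y),true) (insert ((x,y),false) {((x,y-1),false)})) from rfl]
  rw [Finset.sum_insert (by simp [d12]), Finset.sum_insert (by simp),
    Finset.sum_insert (by simp [d34]), Finset.sum_singleton]
  ring

section Counts
variable [NeZero n₁] [NeZero n₂]

/-- number of horizontal edges based in column `x` -/
def hcnt (E : Finset ((ZMod n₁ × ZMod n₂) × Bool)) (x : ZMod n₁) : ℕ :=
  (Finset.univ.filter fun y : ZMod n₂ => ((x,y),true) ∈ E).card

/-- number of vertical edges based in column `x` -/
def vcnt (E : Finset ((ZMod n₁ × ZMod n₂) × Bool)) (x : ZMod n₁) : ℕ :=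
  (Finset.univ.filter fun y : ZMod n₂ => ((x,y),false) ∈ E).card

lemma sum_cnt (E : Finset ((ZMod n₁ × ZMod n₂) × Bool)) (b : Bool) :
    ∑ x : ZMod n₁, ((Finset.univ.filter fun y : ZMod n₂ => ((x,y),b) ∈ E).card)
      = (E.filter fun e => e.2 = b).card := by
  classical
  rw [Finset.card_eq_sum_card_fiberwise
    (f := fun e => e.1.1) (t := Finset.univ) (fun e _ => Finset.mem_univ _)]
  apply Finset.sum_congr rfl
  intro x _
  apply Finset.card_nbij' (i := fun y => ((x, y), b)) (j := fun e => e.1.2)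
  · intro y hy
    simp only [Finset.mem_coe, Finset.mem_filter, Finset.mem_univ, true_and] at hy
    exact Finset.mem_filter.mpr ⟨Finset.mem_filter.mpr ⟨hy, rfl⟩, rfl⟩
  · rintro ⟨⟨u,w⟩,d⟩ he
    simp only [Finset.mem_coe, Finset.mem_filter, Finset.mem_univ, true_and] at he ⊢
    obtain ⟨⟨hE, hd⟩, hu⟩ := he
    subst hd hu
    exact hE
  · intro y hy; rfl
  · rintro ⟨⟨u,w⟩,d⟩ he
    simp only [Finset.mem_coe, Finset.mem_filter] at he
    obtain ⟨⟨hE, hd⟩, hu⟩ := he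
    subst hd hu
    rfl

lemma sum_hcnt (E : Finset ((ZMod n₁ × ZMod n₂) × Bool)) :
    ∑ x : ZMod n₁, hcnt E x = (E.filter fun e => e.2 = true).card := sum_cnt E true

lemma sum_vcnt (E : Finset ((ZMod n₁ × ZMod n₂) × Bool)) :
    ∑ x : ZMod n₁, vcnt E x = (E.filter fun e => e.2 = false).card := sum_cnt E false

lemma col_parity (h1 : (1:ZMod n₁) ≠ 0) (h2 : (1:ZMod n₂) ≠ 0)
    (E : Finset ((ZMod n₁ × ZMod n₂) × Bool))
    (hEv : ∀ v, Even (torusDeg E v)) (x : ZMod n₁) :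
    Even (hcnt E x + hcnt E (x-1)) := by
  classical
  have hsum : Even (∑ y : ZMod n₂, torusDeg E (x,y)) :=
    Finset.even_sum _ (fun y _ => hEv (x,y))
  have hre : ∑ y : ZMod n₂, (if ((x,y-1),false) ∈ E then 1 else 0)
      = ∑ y : ZMod n₂, (if ((x,y),false) ∈ E then 1 else 0) :=
    Fintype.sum_equiv (Equiv.subRight (1 : ZMod n₂)) _ _ (fun y => rfl)
  have hexp : ∑ y : ZMod n₂, torusDeg E (x,y)
      = hcnt E x + hcnt E (x-1) + (vcnt E x + vcnt E x) := by
    simp only [deg_eq h1 h2 E]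
    rw [Finset.sum_add_distrib, Finset.sum_add_distrib, Finset.sum_add_distrib, hre]
    simp only [hcnt, vcnt, Finset.card_filter]
    ring
  rw [hexp] at hsum
  simp only [Nat.even_iff] at *
  omega

lemma cast_ne {n a b : ℕ} (ha : a < n) (hb : b < n) (hab : a ≠ b) :
    (a : ZMod n) ≠ (b : ZMod n) := fun h => hab ((zmod_natcast_eq_iff a b ha hb).mp h)

lemma one_ne_zero' {n : ℕ} (hn : 1 < n) : (1 : ZMod n) ≠ 0 := by
  have := cast_ne (n := n) (a := 1) (b := 0) (by omega) (by omega) (by omega)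
  simpa using this

lemma all_even (h1 : (1:ZMod n₁) ≠ 0) (h2 : (1:ZMod n₂) ≠ 0)
    (E : Finset ((ZMod n₁ × ZMod n₂) × Bool))
    (hEv : ∀ v, Even (torusDeg E v))
    (hlt : (E.filter fun e => e.2 = true).card < n₁) :
    ∀ x, Even (hcnt E x) := by
  have hstep : ∀ x : ZMod n₁, (Even (hcnt E (x+1)) ↔ Even (hcnt E x)) := by
    intro x
    have h := col_parity h1 h2 E hEv (x+1)
    rw [add_sub_cancel_right, Nat.even_add] at h
    exact h
  have hconst := zmod_const (fun x => Even (hcnt E x)) hstep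
  by_contra hodd
  push_neg at hodd
  obtain ⟨x₀, hx₀⟩ := hodd
  have hall : ∀ x, ¬ Even (hcnt E x) := fun x h => hx₀ ((hconst x₀ x).mpr h)
  have hone : ∀ x : ZMod n₁, 1 ≤ hcnt E x := by
    intro x
    rcases Nat.eq_zero_or_pos (hcnt E x) with h | h
    · exact absurd (by simp [h]) (hall x)
    · exact h
  have hbig : (Finset.univ : Finset (ZMod n₁)).card ≤ ∑ x, hcnt E x :=
    calc (Finset.univ : Finset (ZMod n₁)).card = ∑ _x : ZMod n₁, 1 := by simp
    _ ≤ _ := Finset.sum_le_sum (fun x _ => hone x)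
  rw [sum_hcnt, Finset.card_univ, ZMod.card] at hbig
  omega

lemma vert_rel (h1 : (1:ZMod n₁) ≠ 0) (h2 : (1:ZMod n₂) ≠ 0)
    (E : Finset ((ZMod n₁ × ZMod n₂) × Bool))
    (hEv : ∀ v, Even (torusDeg E v)) (x : ZMod n₁) (y : ZMod n₂) :
    ((((x,y),true) ∈ E ↔ ¬ (((x-1,y),true) ∈ E)) ↔
      ((((x,y),false) ∈ E) ↔ ¬ (((x,y-1),false) ∈ E))) := by
  classical
  have h := hEv (x,y)
  rw [deg_eq h1 h2] at h
  exact even_ind4.mp h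

lemma col_const (h1 : (1:ZMod n₁) ≠ 0) (h2 : (1:ZMod n₂) ≠ 0)
    (E : Finset ((ZMod n₁ × ZMod n₂) × Bool))
    (hEv : ∀ v, Even (torusDeg E v)) (x : ZMod n₁)
    (hA : ∀ y, ((x,y),true) ∉ E) (hB : ∀ y, ((x-1,y),true) ∉ E) :
    ∀ y y', (((x,y),false) ∈ E ↔ ((x,y'),false) ∈ E) := by
  classical
  apply zmod_const (fun y => ((x,y),false) ∈ E)
  intro y
  have h := vert_rel h1 h2 E hEv x (y+1)
  rw [add_sub_cancel_right] at h
  simp only [hA, hB] at h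
  tauto

lemma col_empty (E : Finset ((ZMod n₁ × ZMod n₂) × Bool))
    (hcard : E.card = 6) (hn2 : 6 < n₂) (x : ZMod n₁)
    (hconst : ∀ y y', (((x,y),false) ∈ E ↔ ((x,y'),false) ∈ E)) (y : ZMod n₂) :
    ((x,y),false) ∉ E := by
  classical
  intro hy
  have hall : ∀ y', ((x,y'),false) ∈ E := fun y' => (hconst y y').mp hy
  have hinj : Function.Injective (fun y' : ZMod n₂ => (((x,y'),false) : (ZMod n₁ × ZMod n₂) × Bool)) := by
    intro a b h; simpa using h
  have hsub : Finset.univ.image (fun y' : ZMod n₂ => (((x,y'),false) : (ZMod n₁ × ZMod n₂) × Bool)) ⊆ E := by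
    intro e he
    simp only [Finset.mem_image] at he
    obtain ⟨y', _, rfl⟩ := he
    exact hall y'
  have : n₂ ≤ E.card := by
    have := Finset.card_le_card hsub
    rwa [Finset.card_image_of_injective _ hinj, Finset.card_univ, ZMod.card] at this
  omega

lemma no_polygon_H0 (h₁ : 6 < n₁) (h₂ : 6 < n₂)
    (E : Finset ((ZMod n₁ × ZMod n₂) × Bool)) (hpoly : IsLatticePolygon E)
    (hcard : E.card = 6) (hH : (E.filter fun e => e.2 = true).card = 0) : False := by
  classical
  obtain ⟨⟨e, he⟩, hEv⟩ := hpoly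
  have hnoH : ∀ (x : ZMod n₁) (y : ZMod n₂), ((x,y),true) ∉ E := by
    intro x y hmem
    have : ((x,y),true) ∈ E.filter (fun e => e.2 = true) := by
      simp [Finset.mem_filter, hmem]
    rw [Finset.card_eq_zero.mp hH] at this
    simp at this
  obtain ⟨⟨x,y⟩,d⟩ := e
  cases d with
  | true => exact hnoH x y he
  | false =>
    exact col_empty E hcard h₂ x
      (col_const (one_ne_zero' (by omega)) (one_ne_zero' (by omega)) E hEv x
        (hnoH x) (hnoH (x-1))) y he

lemma val_lt_two {n : ℕ} [NeZero n] (hn : 2 < n) (z : ZMod n) :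
    (z.val < 2) ↔ (z = 0 ∨ z = 1) := by
  constructor
  · intro h
    have hz : ((z.val : ℕ) : ZMod n) = z := by simp [ZMod.natCast_val, ZMod.cast_id]
    rcases (by omega : z.val = 0 ∨ z.val = 1) with h0 | h1
    · left; rw [← hz, h0]; simp
    · right; rw [← hz, h1]; simp
  · rintro (rfl | rfl)
    · simp [ZMod.val_zero]
    · haveI : Fact (1 < n) := ⟨by omega⟩
      rw [ZMod.val_one]
      omega

lemma card_of_block {n : ℕ} [NeZero n] (g : ZMod n → Prop) [DecidablePred g]
    (d : ℕ) (hd : d ≤ n) (y₁ : ZMod n)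
    (hdesc : ∀ y, (g y ↔ ((y - y₁).val < d ↔ g y₁))) :
    (Finset.univ.filter g).card = if g y₁ then d else n - d := by
  by_cases hg : g y₁
  · rw [if_pos hg]
    have heq : Finset.univ.filter g = Finset.univ.filter (fun y => (y - y₁).val < d) := by
      apply Finset.filter_congr; intro y _; rw [hdesc y]; simp [hg]
    rw [heq, card_val_lt d hd]
  · rw [if_neg hg]
    have heq : Finset.univ.filter g = Finset.univ.filter (fun y => ¬ ((y - y₁).val < d)) := by
      apply Finset.filter_congr; intro y _; rw [hdesc y]; simp [hg]
    rw [heq, Finset.filter_not, Finset.card_sdiff_of_subset (Finset.filter_subset _ _),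
      card_val_lt d hd, Finset.card_univ, ZMod.card]

/-- the 1-wide, 2-tall rectangle with lower-left corner (a,b) -/
def rectV (a : ZMod n₁) (b : ZMod n₂) : Finset ((ZMod n₁ × ZMod n₂) × Bool) :=
  {((a,b),true), ((a,b+2),true), ((a,b),false), ((a,b+1),false),
   ((a+1,b),false), ((a+1,b+1),false)}

/-- the 2-wide, 1-tall rectangle with lower-left corner (a,b) -/
def rectH (a : ZMod n₁) (b : ZMod n₂) : Finset ((ZMod n₁ × ZMod n₂) × Bool) :=
  {((a,b),false), ((a+2,b),false), ((a,b),true), ((a+1,b),true),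
   ((a,b+1),true), ((a+1,b+1),true)}

lemma assemble (h₁ : 6 < n₁) (h₂ : 6 < n₂)
    (E : Finset ((ZMod n₁ × ZMod n₂) × Bool))
    (a : ZMod n₁) (y₁ y₂ : ZMod n₂) (hy12 : y₁ ≠ y₂)
    (hTmem : ∀ y, (((a,y),true) ∈ E ↔ (y = y₁ ∨ y = y₂)))
    (hTnot : ∀ x y, x ≠ a → ((x,y),true) ∉ E)
    (hVfar : ∀ x, x ≠ a → x ≠ a+1 → ∀ y, ((x,y),false) ∉ E)
    (hsumV : vcnt E a + vcnt E (a+1) = 4)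
    (hflipa : ∀ y, ((((a,y),false) ∈ E ↔ ¬ (((a,y-1),false) ∈ E)) ↔ (y = y₁ ∨ y = y₂)))
    (hflipa1 : ∀ y, ((((a+1,y),false) ∈ E ↔ ¬ (((a+1,y-1),false) ∈ E)) ↔ (y = y₁ ∨ y = y₂)))
    (hga : ((a,y₁),false) ∈ E) :
    E = rectV a y₁ := by
  classical
  have hblocka := block_main (fun y => ((a,y),false) ∈ E) (by omega) hy12 hflipa
  have hblocka1 := block_main (fun y => ((a+1,y),false) ∈ E) (by omega) hy12 hflipa1
  set d := (y₂ - y₁).val with hd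
  have hdn : d < n₂ := ZMod.val_lt _
  have hd0 : 0 < d := by
    rcases Nat.eq_zero_or_pos d with h | h
    · exfalso
      have h0 : y₂ - y₁ = 0 := (ZMod.val_eq_zero (y₂ - y₁)).mp h
      exact hy12 (by linear_combination -h0)
    · exact h
  have hca : vcnt E a = d := by
    have := card_of_block (fun y => ((a,y),false) ∈ E) d hdn.le y₁ hblocka
    rw [if_pos hga] at this
    exact this
  have hva1 : vcnt E (a+1) = if ((a+1,y₁),false) ∈ E then d else n₂ - d :=
    card_of_block (fun y => ((a+1,y),false) ∈ E) d hdn.le y₁ hblocka1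
  have hga1 : ((a+1,y₁),false) ∈ E := by
    by_contra hno
    rw [if_neg hno] at hva1
    omega
  rw [if_pos hga1] at hva1
  have hd2 : d = 2 := by omega
  have hy₂ : y₂ = y₁ + 2 := by
    have : y₂ = y₁ + ((d : ℕ) : ZMod n₂) := by
      simp [hd, ZMod.natCast_val, ZMod.cast_id]
    rw [hd2] at this
    simpa using this
  -- membership characterizations
  have hT : ∀ x y, (((x,y),true) ∈ E ↔ (x = a ∧ (y = y₁ ∨ y = y₁ + 2))) := by
    intro x y
    by_cases hx : x = a
    · subst hx; rw [hTmem y, hy₂] at *; simp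
    · simp [hTnot x y hx, hx]
  have hmem2 : ∀ y : ZMod n₂, ((y - y₁).val < 2 ↔ (y = y₁ ∨ y = y₁ + 1)) := by
    intro y
    rw [val_lt_two (by omega)]
    constructor
    · rintro (h | h)
      · left; linear_combination h
      · right; linear_combination h
    · rintro (rfl | rfl) <;> simp
  have hF : ∀ x y, (((x,y),false) ∈ E ↔ ((x = a ∨ x = a + 1) ∧ (y = y₁ ∨ y = y₁ + 1))) := by
    intro x y
    by_cases hx : x = a
    · subst hx
      refine Iff.trans (hblocka y) ?_
      rw [hd2]
      simp only [hga, iff_true, hmem2 y]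
      tauto
    · by_cases hx1 : x = a + 1
      · subst hx1
        refine Iff.trans (hblocka1 y) ?_
        rw [hd2]
        simp only [hga1, iff_true, hmem2 y]
        tauto
      · simp [hVfar x hx hx1 y, hx, hx1]
  ext e
  obtain ⟨⟨x, y⟩, dd⟩ := e
  cases dd
  · rw [hF x y]
    simp [rectV, Prod.ext_iff]
    tauto
  · rw [hT x y]
    simp [rectV, Prod.ext_iff]
    tauto

lemma classifyH2 (h₁ : 6 < n₁) (h₂ : 6 < n₂)
    (E : Finset ((ZMod n₁ × ZMod n₂) × Bool)) (hpoly : IsLatticePolygon E)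
    (hcard : E.card = 6) (hH : (E.filter fun e => e.2 = true).card = 2) :
    ∃ a b, E = rectV a b := by
  classical
  obtain ⟨hne, hEv⟩ := hpoly
  have h1 : (1 : ZMod n₁) ≠ 0 := one_ne_zero' (by omega)
  have h2 : (1 : ZMod n₂) ≠ 0 := one_ne_zero' (by omega)
  -- all column counts even
  have heven := all_even h1 h2 E hEv (by omega)
  have hsum : ∑ x : ZMod n₁, hcnt E x = 2 := by rw [sum_hcnt, hH]
  have hex : ∃ a, hcnt E a ≠ 0 := by
    by_contra hno
    push_neg at hno
    rw [Finset.sum_congr rfl (fun x _ => hno x)] at hsum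
    simp at hsum
  obtain ⟨a, ha⟩ := hex
  have hle : hcnt E a ≤ 2 := by
    rw [← hsum]
    exact Finset.single_le_sum (fun x _ => Nat.zero_le _) (Finset.mem_univ a)
  have ha2 : hcnt E a = 2 := by
    rcases heven a with ⟨k, hk⟩
    omega
  have hrest : ∀ x, x ≠ a → hcnt E x = 0 := by
    intro x hx
    have := Finset.add_le_sum (f := hcnt E) (fun i _ => Nat.zero_le _)
      (Finset.mem_univ x) (Finset.mem_univ a) hx
    rw [hsum] at this
    omega
  obtain ⟨y₁, y₂, hy12, hset⟩ := Finset.card_eq_two.mp ha2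
  have hTmem : ∀ y, (((a,y),true) ∈ E ↔ (y = y₁ ∨ y = y₂)) := by
    intro y
    have : ((a,y),true) ∈ E ↔ y ∈ Finset.univ.filter (fun y => ((a,y),true) ∈ E) := by
      simp
    rw [this, hset]
    simp
  have hTnot : ∀ x y, x ≠ a → ((x,y),true) ∉ E := by
    intro x y hx hmem
    have h0 := hrest x hx
    rw [hcnt, Finset.card_eq_zero] at h0
    have : y ∈ Finset.univ.filter (fun y => ((x,y),true) ∈ E) := by simp [hmem]
    rw [h0] at this
    simp at this
  have hVfar : ∀ x, x ≠ a → x ≠ a + 1 → ∀ y, ((x,y),false) ∉ E := by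
    intro x hxa hxa1
    refine col_empty E hcard h₂ x (col_const h1 h2 E hEv x (fun y => hTnot x y hxa) ?_)
    refine fun y => hTnot (x-1) y ?_
    intro h
    exact hxa1 (by linear_combination h)
  have hane : a ≠ a + 1 := by
    intro h
    exact h1 (by linear_combination -h)
  have hsumV : vcnt E a + vcnt E (a+1) = 4 := by
    have hV : (E.filter fun e => e.2 = false).card = 4 := by
      have hsplit := Finset.card_filter_add_card_filter_not
        (s := E) (p := fun e => e.2 = true)
      have : (E.filter fun e => ¬ (e.2 = true)) = (E.filter fun e => e.2 = false) := by
        apply Finset.filter_congr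
        intro e _
        simp
      rw [this] at hsplit
      omega
    have h4 : ∑ x : ZMod n₁, vcnt E x = 4 := by rw [sum_vcnt, hV]
    have hz : ∀ x ∈ (Finset.univ : Finset (ZMod n₁)), x ∉ ({a, a+1} : Finset (ZMod n₁)) →
        vcnt E x = 0 := by
      intro x _ hx
      simp only [Finset.mem_insert, Finset.mem_singleton, not_or] at hx
      rw [vcnt, Finset.card_eq_zero, Finset.filter_eq_empty_iff]
      exact fun {y} _ => hVfar x hx.1 hx.2 y
    rw [← Finset.sum_subset (Finset.subset_univ ({a, a+1} : Finset (ZMod n₁))) hz,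
      Finset.sum_pair hane] at h4
    exact h4
  have hflipa : ∀ y, ((((a,y),false) ∈ E ↔ ¬ (((a,y-1),false) ∈ E)) ↔ (y = y₁ ∨ y = y₂)) := by
    intro y
    rw [← vert_rel h1 h2 E hEv a y]
    have hB : ((a-1,y),true) ∉ E := by
      refine hTnot _ _ ?_
      intro h
      exact h1 (by linear_combination -h)
    rw [← hTmem y]
    simp [hB]
  have hflipa1 : ∀ y, ((((a+1,y),false) ∈ E ↔ ¬ (((a+1,y-1),false) ∈ E)) ↔ (y = y₁ ∨ y = y₂)) := by
    intro y
    rw [← vert_rel h1 h2 E hEv (a+1) y]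
    have hA : ((a+1,y),true) ∉ E := hTnot _ _ hane.symm
    have hBeq : a + 1 - 1 = a := by ring
    rw [hBeq, ← hTmem y]
    simp [hA]
  by_cases hga : ((a,y₁),false) ∈ E
  · exact ⟨a, y₁, assemble h₁ h₂ E a y₁ y₂ hy12 hTmem hTnot hVfar hsumV hflipa hflipa1 hga⟩
  · have hblocka := block_main (fun y => ((a,y),false) ∈ E) (by omega) hy12 hflipa
    have hga2 : ((a,y₂),false) ∈ E := by
      have h := hblocka y₂
      simp only [lt_irrefl, false_iff, iff_false] at h
      tauto
    refine ⟨a, y₂, assemble h₁ h₂ E a y₂ y₁ hy12.symm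
      (fun y => (hTmem y).trans or_comm) hTnot hVfar hsumV
      (fun y => (hflipa y).trans or_comm) (fun y => (hflipa1 y).trans or_comm) hga2⟩

def eswap : ((ZMod n₁ × ZMod n₂) × Bool) ≃ ((ZMod n₂ × ZMod n₁) × Bool) where
  toFun e := ((e.1.2, e.1.1), !e.2)
  invFun e := ((e.1.2, e.1.1), !e.2)
  left_inv := by rintro ⟨⟨x,y⟩,d⟩; simp
  right_inv := by rintro ⟨⟨x,y⟩,d⟩; simp

lemma deg_swap (E : Finset ((ZMod n₁ × ZMod n₂) × Bool)) (x : ZMod n₁) (y : ZMod n₂) :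
    torusDeg (E.map eswap.toEmbedding) (y,x) = torusDeg E (x,y) := by
  classical
  unfold torusDeg
  rw [Finset.filter_map, Finset.card_map]
  congr 1
  apply Finset.filter_congr
  rintro ⟨⟨u,w⟩,d⟩ _
  cases d <;> simp [eswap, torusStep, Prod.ext_iff] <;> tauto

lemma filter_swap_card (E : Finset ((ZMod n₁ × ZMod n₂) × Bool)) :
    ((E.map eswap.toEmbedding).filter fun e => e.2 = true).card
      = (E.filter fun e => e.2 = false).card := by
  classical
  rw [Finset.filter_map, Finset.card_map]
  congr 1
  apply Finset.filter_congr
  rintro ⟨⟨u,w⟩,d⟩ _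
  cases d <;> simp [eswap]

lemma poly_swap (E : Finset ((ZMod n₁ × ZMod n₂) × Bool)) (h : IsLatticePolygon E) :
    IsLatticePolygon (E.map eswap.toEmbedding) := by
  obtain ⟨hne, hEv⟩ := h
  refine ⟨hne.map, ?_⟩
  rintro ⟨y, x⟩
  rw [deg_swap]
  exact hEv (x, y)

lemma map_rectH (a : ZMod n₁) (b : ZMod n₂) :
    (rectH a b).map eswap.toEmbedding = rectV b a := by
  classical
  ext e
  obtain ⟨⟨y, x⟩, d⟩ := e
  rw [Finset.mem_map_equiv]
  cases d <;>
    simp [rectH, rectV, eswap, Prod.ext_iff] <;> tauto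

lemma classify (h₁ : 6 < n₁) (h₂ : 6 < n₂)
    (E : Finset ((ZMod n₁ × ZMod n₂) × Bool)) (hpoly : IsLatticePolygon E)
    (hcard : E.card = 6) :
    (∃ a b, E = rectV a b) ∨ (∃ a b, E = rectH a b) := by
  classical
  have h1 : (1 : ZMod n₁) ≠ 0 := one_ne_zero' (by omega)
  have h2 : (1 : ZMod n₂) ≠ 0 := one_ne_zero' (by omega)
  have hEv := hpoly.2
  have hHeven : Even ((E.filter fun e => e.2 = true).card) := by
    rw [← sum_hcnt]
    exact Finset.even_sum _ (fun x _ => all_even h1 h2 E hEv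
      (lt_of_le_of_lt (le_trans (Finset.card_filter_le _ _) hcard.le) h₁) x)
  have hHle : (E.filter fun e => e.2 = true).card ≤ 6 :=
    le_trans (Finset.card_filter_le _ _) hcard.le
  have hsplit : (E.filter fun e => e.2 = true).card
      + (E.filter fun e => e.2 = false).card = 6 := by
    have h := Finset.card_filter_add_card_filter_not
      (s := E) (p := fun e => e.2 = true)
    have heq : (E.filter fun e => ¬ (e.2 = true)) = (E.filter fun e => e.2 = false) := by
      apply Finset.filter_congr
      intro e _
      simp
    rw [heq] at h
    omega
  -- swapped polygon
  haveI : NeZero n₁ := ⟨by omega⟩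
  haveI : NeZero n₂ := ⟨by omega⟩
  set E' := E.map (eswap (n₁ := n₁) (n₂ := n₂)).toEmbedding with hE'
  have hpoly' : IsLatticePolygon E' := poly_swap E hpoly
  have hcard' : E'.card = 6 := by rw [hE', Finset.card_map]; exact hcard
  have hH' : (E'.filter fun e => e.2 = true).card = (E.filter fun e => e.2 = false).card :=
    filter_swap_card E
  obtain ⟨k, hk⟩ := hHeven
  rcases (by omega : (E.filter fun e => e.2 = true).card = 0
      ∨ (E.filter fun e => e.2 = true).card = 2
      ∨ (E.filter fun e => e.2 = true).card = 4
      ∨ (E.filter fun e => e.2 = true).card = 6) with h0 | h2' | h4 | h6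
  · exact absurd (no_polygon_H0 h₁ h₂ E hpoly hcard h0) (by simp)
  · left
    exact classifyH2 h₁ h₂ E hpoly hcard h2'
  · right
    have hc2 : (E'.filter fun e => e.2 = true).card = 2 := by omega
    obtain ⟨a, b, hab⟩ := classifyH2 h₂ h₁ E' hpoly' hcard' hc2
    refine ⟨b, a, ?_⟩
    apply Finset.map_injective (eswap (n₁ := n₁) (n₂ := n₂)).toEmbedding
    rw [← hE'.symm] at hab
    rw [hab, map_rectH]
  · have hc0 : (E'.filter fun e => e.2 = true).card = 0 := by omega
    exact absurd (no_polygon_H0 h₂ h₁ E' hpoly' hcard' hc0) (by simp)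

lemma two_ne_zero' {n : ℕ} (hn : 2 < n) : (2 : ZMod n) ≠ 0 := by
  have := cast_ne (n := n) (a := 2) (b := 0) (by omega) (by omega) (by omega)
  simpa using this

lemma two_ne_one' {n : ℕ} (hn : 2 < n) : (2 : ZMod n) ≠ 1 := by
  have := cast_ne (n := n) (a := 2) (b := 1) (by omega) (by omega) (by omega)
  simpa using this

lemma mem_rectV_T (a : ZMod n₁) (b : ZMod n₂) (x : ZMod n₁) (y : ZMod n₂) :
    (((x,y),true) ∈ rectV a b) ↔ (x = a ∧ (y = b ∨ y = b + 2)) := by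
  simp [rectV, Prod.ext_iff]
  tauto

lemma mem_rectV_F (a : ZMod n₁) (b : ZMod n₂) (x : ZMod n₁) (y : ZMod n₂) :
    (((x,y),false) ∈ rectV a b) ↔ ((x = a ∨ x = a + 1) ∧ (y = b ∨ y = b + 1)) := by
  simp [rectV, Prod.ext_iff]
  tauto

lemma mem_rectH_T (a : ZMod n₁) (b : ZMod n₂) (x : ZMod n₁) (y : ZMod n₂) :
    (((x,y),true) ∈ rectH a b) ↔ ((x = a ∨ x = a + 1) ∧ (y = b ∨ y = b + 1)) := by
  simp [rectH, Prod.ext_iff]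
  tauto

lemma mem_rectH_F (a : ZMod n₁) (b : ZMod n₂) (x : ZMod n₁) (y : ZMod n₂) :
    (((x,y),false) ∈ rectH a b) ↔ (y = b ∧ (x = a ∨ x = a + 2)) := by
  simp [rectH, Prod.ext_iff]
  tauto

lemma rectV_card (h₁ : 6 < n₁) (h₂ : 6 < n₂) (a : ZMod n₁) (b : ZMod n₂) :
    (rectV a b).card = 6 := by
  have ha1 : a ≠ a + 1 := fun h => one_ne_zero' (n := n₁) (by omega) (by linear_combination -h)
  have hb1 : b ≠ b + 1 := fun h => one_ne_zero' (n := n₂) (by omega) (by linear_combination -h)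
  have hb2 : b ≠ b + 2 := fun h => two_ne_zero' (n := n₂) (by omega) (by linear_combination -h)
  have hb12 : b + 1 ≠ b + 2 := fun h => one_ne_zero' (n := n₂) (by omega) (by linear_combination -h)
  rw [show rectV a b = insert ((a,b),true) (insert ((a,b+2),true) (insert ((a,b),false)
    (insert ((a,b+1),false) (insert ((a+1,b),false) {((a+1,b+1),false)})))) from rfl]
  rw [Finset.card_insert_of_notMem (by simp [Prod.ext_iff, hb2]),
    Finset.card_insert_of_notMem (by simp),
    Finset.card_insert_of_notMem (by simp [Prod.ext_iff, hb1, ha1]),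
    Finset.card_insert_of_notMem (by simp [Prod.ext_iff, ha1]),
    Finset.card_insert_of_notMem (by simp [Prod.ext_iff, hb1]),
    Finset.card_singleton]

lemma rectV_poly (h₁ : 6 < n₁) (h₂ : 6 < n₂) (a : ZMod n₁) (b : ZMod n₂) :
    IsLatticePolygon (rectV a b) := by
  have h1 : (1 : ZMod n₁) ≠ 0 := one_ne_zero' (by omega)
  have h2 : (1 : ZMod n₂) ≠ 0 := one_ne_zero' (by omega)
  have ha1 : a ≠ a + 1 := fun h => h1 (by linear_combination -h)
  have hb1 : b ≠ b + 1 := fun h => h2 (by linear_combination -h)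
  have hb2 : b ≠ b + 2 := fun h => two_ne_zero' (n := n₂) (by omega) (by linear_combination -h)
  have hb12 : b + 1 ≠ b + 2 := fun h => h2 (by linear_combination -h)
  have hb11 : b + (1 : ZMod n₂) + 1 = b + 2 := by ring
  refine ⟨⟨((a,b),true), by simp [rectV]⟩, ?_⟩
  rintro ⟨x, y⟩
  rw [deg_eq h1 h2]
  simp only [mem_rectV_T, mem_rectV_F, sub_eq_iff_eq_add, hb11]
  by_cases hxa : x = a <;> by_cases hxa1 : x = a + 1 <;> by_cases hyb : y = b <;>
    by_cases hyb1 : y = b + 1 <;> by_cases hyb2 : y = b + 2 <;>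
    simp_all <;> decide

lemma rectH_card (h₁ : 6 < n₁) (h₂ : 6 < n₂) (a : ZMod n₁) (b : ZMod n₂) :
    (rectH a b).card = 6 := by
  calc (rectH a b).card = ((rectH a b).map eswap.toEmbedding).card := (Finset.card_map _).symm
  _ = (rectV b a).card := by rw [map_rectH]
  _ = 6 := rectV_card h₂ h₁ b a

lemma rectH_poly (h₁ : 6 < n₁) (h₂ : 6 < n₂) (a : ZMod n₁) (b : ZMod n₂) :
    IsLatticePolygon (rectH a b) := by
  refine ⟨⟨((a,b),false), by simp [rectH]⟩, ?_⟩
  rintro ⟨x, y⟩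
  have h := (rectV_poly h₂ h₁ b a).2 (y, x)
  rw [← map_rectH a b, deg_swap] at h
  exact h

lemma rectV_filter_T (h₁ : 6 < n₁) (h₂ : 6 < n₂) (a : ZMod n₁) (b : ZMod n₂) :
    ((rectV a b).filter fun e => e.2 = true).card = 2 := by
  have hb2 : b ≠ b + 2 := fun h => two_ne_zero' (n := n₂) (by omega) (by linear_combination -h)
  have heq : (rectV a b).filter (fun e => e.2 = true) = {((a,b),true), ((a,b+2),true)} := by
    ext ⟨⟨x,y⟩,d⟩
    cases d <;> simp [rectV, Finset.mem_filter, Prod.ext_iff] <;> tauto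
  rw [heq, Finset.card_insert_of_notMem (by simp [Prod.ext_iff, hb2]), Finset.card_singleton]

lemma rectH_filter_T (h₁ : 6 < n₁) (h₂ : 6 < n₂) (a : ZMod n₁) (b : ZMod n₂) :
    ((rectH a b).filter fun e => e.2 = true).card = 4 := by
  have ha1 : a ≠ a + 1 := fun h => one_ne_zero' (n := n₁) (by omega) (by linear_combination -h)
  have hb1 : b ≠ b + 1 := fun h => one_ne_zero' (n := n₂) (by omega) (by linear_combination -h)
  have h1 : (1 : ZMod n₁) ≠ 0 := one_ne_zero' (by omega)
  have h2 : (1 : ZMod n₂) ≠ 0 := one_ne_zero' (by omega)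
  have heq : (rectH a b).filter (fun e => e.2 = true)
      = {((a,b),true), ((a+1,b),true), ((a,b+1),true), ((a+1,b+1),true)} := by
    ext ⟨⟨x,y⟩,d⟩
    cases d <;> simp [rectH, Finset.mem_filter, Prod.ext_iff] <;> tauto
  rw [heq,
    Finset.card_insert_of_notMem (by simp [Prod.ext_iff, ha1, hb1, h1, h2]),
    Finset.card_insert_of_notMem (by simp [Prod.ext_iff, ha1, hb1, h1, h2]),
    Finset.card_insert_of_notMem (by simp [Prod.ext_iff, hb1, h1, h2]),
    Finset.card_singleton]

lemma rectV_inj (h₁ : 6 < n₁) (h₂ : 6 < n₂) (a a' : ZMod n₁) (b b' : ZMod n₂)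
    (h : rectV a b = rectV a' b') : a = a' ∧ b = b' := by
  have hb2 : b + 2 ≠ b := fun h => two_ne_zero' (n := n₂) (by omega) (by linear_combination h)
  have hb12 : b + 2 ≠ b + 1 := fun h => one_ne_zero' (n := n₂) (by omega) (by linear_combination h)
  have hT : ((a',b'),true) ∈ rectV a b := by
    rw [h, mem_rectV_T]; exact ⟨rfl, Or.inl rfl⟩
  have hF : ((a',b'),false) ∈ rectV a b := by
    rw [h, mem_rectV_F]; exact ⟨Or.inl rfl, Or.inl rfl⟩
  rw [mem_rectV_T] at hT
  rw [mem_rectV_F] at hF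
  obtain ⟨rfl, hb | hb⟩ := hT
  · exact ⟨rfl, hb.symm⟩
  · subst hb
    rcases hF.2 with h' | h'
    · exact absurd h' hb2
    · exact absurd h' hb12

lemma rectH_inj (h₁ : 6 < n₁) (h₂ : 6 < n₂) (a a' : ZMod n₁) (b b' : ZMod n₂)
    (h : rectH a b = rectH a' b') : a = a' ∧ b = b' := by
  have ha2 : a + 2 ≠ a := fun h => two_ne_zero' (n := n₁) (by omega) (by linear_combination h)
  have ha12 : a + 2 ≠ a + 1 := fun h => one_ne_zero' (n := n₁) (by omega) (by linear_combination h)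
  have hF : ((a',b'),false) ∈ rectH a b := by
    rw [h, mem_rectH_F]; exact ⟨rfl, Or.inl rfl⟩
  have hT : ((a',b'),true) ∈ rectH a b := by
    rw [h, mem_rectH_T]; exact ⟨Or.inl rfl, Or.inl rfl⟩
  rw [mem_rectH_F] at hF
  rw [mem_rectH_T] at hT
  obtain ⟨rfl, ha | ha⟩ := hF
  · exact ⟨ha.symm, rfl⟩
  · subst ha
    rcases hT.1 with h' | h'
    · exact absurd h' ha2
    · exact absurd h' ha12

end Counts
end Aux

theorem polygons_six_edges (n₁ n₂ : ℕ) (h₁ : 6 < n₁) (h₂ : 6 < n₂) :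
    {E : Finset ((ZMod n₁ × ZMod n₂) × Bool) | IsLatticePolygon E ∧ E.card = 6}.ncard =
      2 * (n₁ * n₂) := by
  classical
  haveI : NeZero n₁ := ⟨by omega⟩
  haveI : NeZero n₂ := ⟨by omega⟩
  set f : Bool × ZMod n₁ × ZMod n₂ → Finset ((ZMod n₁ × ZMod n₂) × Bool) :=
    fun v => if v.1 then Aux.rectH v.2.1 v.2.2 else Aux.rectV v.2.1 v.2.2 with hf
  have hinj : Function.Injective f := by
    rintro ⟨s, a, b⟩ ⟨s', a', b'⟩ h
    simp only [hf] at h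
    cases s <;> cases s' <;> simp only [Bool.false_eq_true, if_true, if_false] at h
    · obtain ⟨ha, hb⟩ := Aux.rectV_inj h₁ h₂ a a' b b' h
      subst ha; subst hb; rfl
    · exfalso
      have c : ((Aux.rectV a b).filter (fun e => e.2 = true)).card
          = ((Aux.rectH a' b').filter (fun e => e.2 = true)).card := by rw [h]
      rw [Aux.rectV_filter_T h₁ h₂, Aux.rectH_filter_T h₁ h₂] at c
      omega
    · exfalso
      have c : ((Aux.rectH a b).filter (fun e => e.2 = true)).card
          = ((Aux.rectV a' b').filter (fun e => e.2 = true)).card := by rw [h]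
      rw [Aux.rectV_filter_T h₁ h₂, Aux.rectH_filter_T h₁ h₂] at c
      omega
    · obtain ⟨ha, hb⟩ := Aux.rectH_inj h₁ h₂ a a' b b' h
      subst ha; subst hb; rfl
  have hS : {E : Finset ((ZMod n₁ × ZMod n₂) × Bool) | IsLatticePolygon E ∧ E.card = 6}
      = ↑(Finset.univ.image f) := by
    ext E
    simp only [Set.mem_setOf_eq, Finset.mem_coe, Finset.mem_image]
    constructor
    · rintro ⟨hpoly, hcard⟩
      rcases Aux.classify h₁ h₂ E hpoly hcard with ⟨a, b, rfl⟩ | ⟨a, b, rfl⟩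
      · exact ⟨(false, a, b), Finset.mem_univ _, rfl⟩
      · exact ⟨(true, a, b), Finset.mem_univ _, rfl⟩
    · rintro ⟨⟨s, a, b⟩, -, rfl⟩
      cases s
      · exact ⟨Aux.rectV_poly h₁ h₂ a b, Aux.rectV_card h₁ h₂ a b⟩
      · exact ⟨Aux.rectH_poly h₁ h₂ a b, Aux.rectH_card h₁ h₂ a b⟩
  rw [hS, Set.ncard_coe_finset, Finset.card_image_of_injective _ hinj, Finset.card_univ]
  simp [ZMod.card]
end
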